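/- Let W and B be d×d real symmetric positive semidefinite matrices. Then the matrix I + W B is invertible, where I is the d×d identity matrix. -/

import Mathlib

open Matrix

/-- Key invertibility step in the proof of Proposition 1: if `W` and `B` are real
symmetric positive semidefinite `d × d` matrices, then `I + W * B` is invertible. -/
theorem one_add_prod_psd_isUnit {d : ℕ}
    (W B : Matrix (Fin d) (Fin d) ℝ)
    (hW : W.PosSemidef) (hB : B.PosSemidef) :
    IsUnit (1 + W * B) := by
  open scoped MatrixOrder in set S := CFC.sqrt W with hS
  open scoped MatrixOrder in have hSpsd : S.PosSemidef := (CFC.sqrt_nonneg W).posSemidef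
  open scoped MatrixOrder in have hSS : S * S = W := CFC.sqrt_mul_sqrt_self W hW.nonneg
  have hM : (S * B * S).PosSemidef := by
    have := hB.mul_mul_conjTranspose_same S
    rwa [hSpsd.isHermitian.eq] at this
  have hPD : (1 + S * B * S).PosDef :=
    Matrix.PosDef.add_posSemidef Matrix.PosDef.one hM
  have hdet : (1 + W * B).det = (1 + S * B * S).det := by
    calc (1 + W * B).det = (1 + S * (S * B)).det := by rw [← hSS, mul_assoc]
      _ = (1 + (S * B) * S).det := Matrix.det_one_add_mul_comm S (S * B)
      _ = (1 + S * B * S).det := rfl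
  rw [Matrix.isUnit_iff_isUnit_det, hdet]
  exact isUnit_iff_ne_zero.mpr hPD.det_pos.ne'
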